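/- arXiv:2105.03385 — 3 statements merged into one kernel-verified Lean document; each statement's English description precedes it below -/
import Mathlib

section
/- Let I = [a,b], 0 < δ ≤ 1 ≤ M, α₁,…,αₙ ≥ 0 with ∑ α_k = 1, and let f₁, f₂ ∈ F_I(δ,M). Then ‖L_{f₁} − L_{f₂}‖_I ≤ K₂ ‖f₁ − f₂‖_I and ‖L_{f₁}⁻¹ − L_{f₂}⁻¹‖_I ≤ (K₂/K₀) ‖f₁ − f₂‖_I, where K₀ := ∑_{k=1}^n α_k δ^{k−1} and K₂ := ∑_{k=2}^n α_k (∑_{j=0}^{k−2} M^j). -/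
private lemma iterLower {a b δ : ℝ} (hδ0 : 0 < δ) {f : ℝ → ℝ}
    (hmaps : Set.MapsTo f (Set.Icc a b) (Set.Icc a b))
    (hlip : ∀ x ∈ Set.Icc a b, ∀ y ∈ Set.Icc a b, y ≤ x →
      δ * (x - y) ≤ f x - f y) (m : ℕ) :
    ∀ x ∈ Set.Icc a b, ∀ y ∈ Set.Icc a b, y ≤ x →
      δ ^ m * (x - y) ≤ f^[m] x - f^[m] y := by
  induction m with
  | zero => intro x hx y hy hyx; simp
  | succ m ih =>
    intro x hx y hy hyx
    have hxm := (hmaps.iterate m) hx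
    have hym := (hmaps.iterate m) hy
    have h1 := ih x hx y hy hyx
    have hδm := pow_pos hδ0 m
    have hle : f^[m] y ≤ f^[m] x := by nlinarith
    have h2 := hlip _ hxm _ hym hle
    simp only [Function.iterate_succ_apply']
    calc δ ^ (m + 1) * (x - y) = δ * (δ ^ m * (x - y)) := by ring
      _ ≤ δ * (f^[m] x - f^[m] y) := by nlinarith
      _ ≤ f (f^[m] x) - f (f^[m] y) := h2

private lemma iterDiff {a b M D : ℝ} (hM0 : 0 ≤ M) (hD0 : 0 ≤ D) {f₁ f₂ : ℝ → ℝ}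
    (hmaps₁ : Set.MapsTo f₁ (Set.Icc a b) (Set.Icc a b))
    (hmaps₂ : Set.MapsTo f₂ (Set.Icc a b) (Set.Icc a b))
    (hlipM : ∀ u ∈ Set.Icc a b, ∀ v ∈ Set.Icc a b, |f₁ u - f₁ v| ≤ M * |u - v|)
    (hD : ∀ x ∈ Set.Icc a b, |f₁ x - f₂ x| ≤ D) (m : ℕ) :
    ∀ x ∈ Set.Icc a b, |f₁^[m] x - f₂^[m] x| ≤ (∑ j ∈ Finset.range m, M ^ j) * D := by
  induction m with
  | zero => intro x hx; simp
  | succ m ih =>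
    intro x hx
    have h1m := ih x hx
    have h2m := (hmaps₂.iterate m) hx
    have h1m' := (hmaps₁.iterate m) hx
    have hl := hlipM _ h1m' _ h2m
    have hd := hD _ h2m
    simp only [Function.iterate_succ_apply']
    have htri : |f₁ (f₁^[m] x) - f₂ (f₂^[m] x)| ≤
        |f₁ (f₁^[m] x) - f₁ (f₂^[m] x)| + |f₁ (f₂^[m] x) - f₂ (f₂^[m] x)| :=
      abs_sub_le _ (f₁ (f₂^[m] x)) _
    have hgeom : (∑ j ∈ Finset.range (m + 1), M ^ j)
        = M * (∑ j ∈ Finset.range m, M ^ j) + 1 := geom_sum_succ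
    rw [hgeom]
    nlinarith [abs_nonneg (f₁^[m] x - f₂^[m] x)]

/-- Lipschitz dependence of `L_f` and `L_f⁻¹` on `f`:
`‖L_{f₁} − L_{f₂}‖_I ≤ K₂‖f₁ − f₂‖_I` and
`‖L_{f₁}⁻¹ − L_{f₂}⁻¹‖_I ≤ (K₂/K₀)‖f₁ − f₂‖_I`. -/
theorem stmt12 (a b δ M : ℝ) (hab : a < b) (hδ0 : 0 < δ) (hδ1 : δ ≤ 1)
    (hM : 1 ≤ M) (n : ℕ) (hn : 1 ≤ n) (α : ℕ → ℝ)
    (hα : ∀ k ∈ Finset.Icc 1 n, 0 ≤ α k)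
    (hαsum : ∑ k ∈ Finset.Icc 1 n, α k = 1)
    (f₁ f₂ : ℝ → ℝ)
    (hmaps₁ : Set.MapsTo f₁ (Set.Icc a b) (Set.Icc a b))
    (hcont₁ : ContinuousOn f₁ (Set.Icc a b))
    (hfa₁ : f₁ a = a) (hfb₁ : f₁ b = b)
    (hlip₁ : ∀ x ∈ Set.Icc a b, ∀ y ∈ Set.Icc a b, y ≤ x →
      δ * (x - y) ≤ f₁ x - f₁ y ∧ f₁ x - f₁ y ≤ M * (x - y))
    (hmaps₂ : Set.MapsTo f₂ (Set.Icc a b) (Set.Icc a b))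
    (hcont₂ : ContinuousOn f₂ (Set.Icc a b))
    (hfa₂ : f₂ a = a) (hfb₂ : f₂ b = b)
    (hlip₂ : ∀ x ∈ Set.Icc a b, ∀ y ∈ Set.Icc a b, y ≤ x →
      δ * (x - y) ≤ f₂ x - f₂ y ∧ f₂ x - f₂ y ≤ M * (x - y))
    (Linv₁ Linv₂ : ℝ → ℝ)
    (hLinv₁m : Set.MapsTo Linv₁ (Set.Icc a b) (Set.Icc a b))
    (hLinv₂m : Set.MapsTo Linv₂ (Set.Icc a b) (Set.Icc a b))
    (hLinv₁l : ∀ x ∈ Set.Icc a b,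
      Linv₁ (∑ k ∈ Finset.Icc 1 n, α k * f₁^[k - 1] x) = x)
    (hLinv₁r : ∀ x ∈ Set.Icc a b,
      (∑ k ∈ Finset.Icc 1 n, α k * f₁^[k - 1] (Linv₁ x)) = x)
    (hLinv₂l : ∀ x ∈ Set.Icc a b,
      Linv₂ (∑ k ∈ Finset.Icc 1 n, α k * f₂^[k - 1] x) = x)
    (hLinv₂r : ∀ x ∈ Set.Icc a b,
      (∑ k ∈ Finset.Icc 1 n, α k * f₂^[k - 1] (Linv₂ x)) = x) :
    sSup ((fun x => |(∑ k ∈ Finset.Icc 1 n, α k * f₁^[k - 1] x)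
        - (∑ k ∈ Finset.Icc 1 n, α k * f₂^[k - 1] x)|) '' Set.Icc a b)
      ≤ (∑ k ∈ Finset.Icc 2 n, α k * (∑ j ∈ Finset.range (k - 1), M ^ j)) *
        sSup ((fun x => |f₁ x - f₂ x|) '' Set.Icc a b) ∧
    sSup ((fun x => |Linv₁ x - Linv₂ x|) '' Set.Icc a b)
      ≤ ((∑ k ∈ Finset.Icc 2 n, α k * (∑ j ∈ Finset.range (k - 1), M ^ j))
          / (∑ k ∈ Finset.Icc 1 n, α k * δ ^ (k - 1))) *
        sSup ((fun x => |f₁ x - f₂ x|) '' Set.Icc a b) := by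
  have hab' : a ≤ b := hab.le
  have haI : a ∈ Set.Icc a b := by simp [hab']
  have hM0 : (0:ℝ) ≤ M := by linarith
  -- Lipschitz in absolute values for f₁
  have habs₁ : ∀ u ∈ Set.Icc a b, ∀ v ∈ Set.Icc a b, |f₁ u - f₁ v| ≤ M * |u - v| := by
    intro u hu v hv
    rcases le_total v u with h | h
    · obtain ⟨hl, hr⟩ := hlip₁ u hu v hv h
      rw [abs_of_nonneg (by nlinarith), abs_of_nonneg (by linarith)]
      exact hr
    · obtain ⟨hl, hr⟩ := hlip₁ v hv u hu h
      rw [abs_sub_comm, abs_sub_comm u v, abs_of_nonneg (by nlinarith),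
        abs_of_nonneg (by linarith)]
      exact hr
  -- the sup norm D
  set D := sSup ((fun x => |f₁ x - f₂ x|) '' Set.Icc a b) with hDdef
  have hBdd : BddAbove ((fun x => |f₁ x - f₂ x|) '' Set.Icc a b) := by
    refine ⟨b - a, ?_⟩
    rintro y ⟨x, hx, rfl⟩
    have h1 := hmaps₁ hx
    have h2 := hmaps₂ hx
    simp only [Set.mem_Icc] at h1 h2
    exact abs_le.mpr ⟨by linarith, by linarith⟩
  have hD : ∀ x ∈ Set.Icc a b, |f₁ x - f₂ x| ≤ D :=
    fun x hx => le_csSup hBdd ⟨x, hx, rfl⟩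
  have hD0 : 0 ≤ D := (abs_nonneg _).trans (hD a haI)
  -- K₂
  set K₂ := ∑ k ∈ Finset.Icc 2 n, α k * (∑ j ∈ Finset.range (k - 1), M ^ j) with hK₂def
  have hsub : Finset.Icc 2 n ⊆ Finset.Icc 1 n := Finset.Icc_subset_Icc_left one_le_two
  have hK₂0 : 0 ≤ K₂ := by
    refine Finset.sum_nonneg fun k hk => mul_nonneg (hα k (hsub hk)) ?_
    exact Finset.sum_nonneg fun j _ => pow_nonneg hM0 j
  -- pointwise bound for part 1
  have hpt : ∀ x ∈ Set.Icc a b,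
      |(∑ k ∈ Finset.Icc 1 n, α k * f₁^[k - 1] x)
        - (∑ k ∈ Finset.Icc 1 n, α k * f₂^[k - 1] x)| ≤ K₂ * D := by
    intro x hx
    have h1 : (∑ k ∈ Finset.Icc 1 n, α k * f₁^[k - 1] x)
        - (∑ k ∈ Finset.Icc 1 n, α k * f₂^[k - 1] x)
        = ∑ k ∈ Finset.Icc 1 n, α k * (f₁^[k - 1] x - f₂^[k - 1] x) := by
      rw [← Finset.sum_sub_distrib]
      exact Finset.sum_congr rfl fun k _ => by ring
    rw [h1]
    calc |∑ k ∈ Finset.Icc 1 n, α k * (f₁^[k - 1] x - f₂^[k - 1] x)|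
        ≤ ∑ k ∈ Finset.Icc 1 n, |α k * (f₁^[k - 1] x - f₂^[k - 1] x)| :=
          Finset.abs_sum_le_sum_abs _ _
      _ ≤ ∑ k ∈ Finset.Icc 1 n, α k * ((∑ j ∈ Finset.range (k - 1), M ^ j) * D) := by
          refine Finset.sum_le_sum fun k hk => ?_
          rw [abs_mul, abs_of_nonneg (hα k hk)]
          exact mul_le_mul_of_nonneg_left
            (iterDiff hM0 hD0 hmaps₁ hmaps₂ habs₁ hD (k - 1) x hx) (hα k hk)
      _ = ∑ k ∈ Finset.Icc 2 n, α k * ((∑ j ∈ Finset.range (k - 1), M ^ j) * D) := by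
          refine (Finset.sum_subset hsub fun k hk hk2 => ?_).symm
          simp only [Finset.mem_Icc] at hk hk2
          have : k = 1 := by omega
          subst this
          simp
      _ = K₂ * D := by
          rw [hK₂def, Finset.sum_mul]
          exact Finset.sum_congr rfl fun k _ => by ring
  -- K₀
  set K₀ := ∑ k ∈ Finset.Icc 1 n, α k * δ ^ (k - 1) with hK₀def
  have hK₀ge : δ ^ (n - 1) ≤ K₀ := by
    calc δ ^ (n - 1) = ∑ k ∈ Finset.Icc 1 n, α k * δ ^ (n - 1) := by
          rw [← Finset.sum_mul, hαsum, one_mul]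
      _ ≤ K₀ := by
          refine Finset.sum_le_sum fun k hk => ?_
          refine mul_le_mul_of_nonneg_left ?_ (hα k hk)
          refine pow_le_pow_of_le_one hδ0.le hδ1 ?_
          simp only [Finset.mem_Icc] at hk
          omega
  have hK₀pos : 0 < K₀ := lt_of_lt_of_le (pow_pos hδ0 _) hK₀ge
  -- strong monotonicity of L₁
  have hmono : ∀ u ∈ Set.Icc a b, ∀ v ∈ Set.Icc a b, v ≤ u →
      K₀ * (u - v) ≤ (∑ k ∈ Finset.Icc 1 n, α k * f₁^[k - 1] u)
        - (∑ k ∈ Finset.Icc 1 n, α k * f₁^[k - 1] v) := by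
    intro u hu v hv hvu
    rw [← Finset.sum_sub_distrib, hK₀def, Finset.sum_mul]
    refine Finset.sum_le_sum fun k hk => ?_
    have hl := iterLower hδ0 hmaps₁ (fun x hx y hy hyx => (hlip₁ x hx y hy hyx).1)
      (k - 1) u hu v hv hvu
    have hαk := hα k hk
    nlinarith
  constructor
  · refine Real.sSup_le ?_ (mul_nonneg hK₂0 hD0)
    rintro y ⟨x, hx, rfl⟩
    exact hpt x hx
  · refine Real.sSup_le ?_ (mul_nonneg (div_nonneg hK₂0 hK₀pos.le) hD0)
    rintro y ⟨x, hx, rfl⟩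
    have hu := hLinv₁m hx
    have hv := hLinv₂m hx
    have hequ : (∑ k ∈ Finset.Icc 1 n, α k * f₁^[k - 1] (Linv₁ x)) = x := hLinv₁r x hx
    have heqv : (∑ k ∈ Finset.Icc 1 n, α k * f₂^[k - 1] (Linv₂ x)) = x := hLinv₂r x hx
    have hptv := hpt (Linv₂ x) hv
    have key : K₀ * |Linv₁ x - Linv₂ x| ≤ K₂ * D := by
      rcases le_total (Linv₂ x) (Linv₁ x) with h | h
      · have h1 := hmono (Linv₁ x) hu (Linv₂ x) hv h
        have h3 := neg_abs_le ((∑ k ∈ Finset.Icc 1 n, α k * f₁^[k - 1] (Linv₂ x))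
          - (∑ k ∈ Finset.Icc 1 n, α k * f₂^[k - 1] (Linv₂ x)))
        rw [abs_of_nonneg (by linarith)]
        linarith
      · have h1 := hmono (Linv₂ x) hv (Linv₁ x) hu h
        have h3 := le_abs_self ((∑ k ∈ Finset.Icc 1 n, α k * f₁^[k - 1] (Linv₂ x))
          - (∑ k ∈ Finset.Icc 1 n, α k * f₂^[k - 1] (Linv₂ x)))
        rw [abs_of_nonpos (by linarith)]
        linarith
    show |Linv₁ x - Linv₂ x| ≤ K₂ / K₀ * D
    rw [div_mul_eq_mul_div, le_div_iff₀ hK₀pos, mul_comm]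
    exact key
end

section
/- Let 0 < α₁ < 1, α₂,…,αₙ ≥ 0 with ∑_{k=1}^n α_k = 1, let 0 < δ ≤ 1 ≤ M, and set K₀ = ∑ α_k δ^{k−1}, K₁ = ∑ α_k M^{k−1}, K₂ = ∑_{k=2}^n α_k (∑_{j=0}^{k−2} M^j). Let I = [a,b] with a < b, and let F : ℝ → ℝ be continuous bounded with range(F) = I, F(a) = a, F(b) = b, and K₁δ(x−y) ≤ F(x) − F(y) ≤ K₀M(x−y) for all x ≥ y in I. If K₂ < K₀, then the equation α₁ f(x) + α₂ f²(x) + ⋯ + αₙ fⁿ(x) = F(x) for all x ∈ ℝ has exactly one solution f in F_I(δ,M). -/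
open Set Finset Function
lemma iter_bounds {a b δ M : ℝ} {f : ℝ → ℝ} (hδ : 0 ≤ δ) (hM : 0 ≤ M)
    (hmap : Set.MapsTo f (Set.Icc a b) (Set.Icc a b))
    (hlip : ∀ x ∈ Set.Icc a b, ∀ y ∈ Set.Icc a b, y ≤ x →
      δ * (x - y) ≤ f x - f y ∧ f x - f y ≤ M * (x - y)) :
    ∀ m : ℕ, ∀ x ∈ Set.Icc a b, ∀ y ∈ Set.Icc a b, y ≤ x →
      δ ^ m * (x - y) ≤ f^[m] x - f^[m] y ∧ f^[m] x - f^[m] y ≤ M ^ m * (x - y) := by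
  intro m
  induction m with
  | zero => intro x hx y hy hxy; simp
  | succ m ih =>
    intro x hx y hy hxy
    have h1 := hlip x hx y hy hxy
    have hfxy : f y ≤ f x := by nlinarith [h1.1]
    have h2 := ih (f x) (hmap hx) (f y) (hmap hy) hfxy
    rw [Function.iterate_succ_apply, Function.iterate_succ_apply]
    constructor
    · calc δ ^ (m+1) * (x - y) = δ ^ m * (δ * (x - y)) := by ring
        _ ≤ δ ^ m * (f x - f y) := by
            exact mul_le_mul_of_nonneg_left h1.1 (pow_nonneg hδ m)
        _ ≤ f^[m] (f x) - f^[m] (f y) := h2.1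
    · calc f^[m] (f x) - f^[m] (f y) ≤ M ^ m * (f x - f y) := h2.2
        _ ≤ M ^ m * (M * (x - y)) := mul_le_mul_of_nonneg_left h1.2 (pow_nonneg hM m)
        _ = M ^ (m+1) * (x - y) := by ring


lemma iter_lip {a b M : ℝ} {f : ℝ → ℝ} (hM : 0 ≤ M)
    (hmap : Set.MapsTo f (Set.Icc a b) (Set.Icc a b))
    (hlip : ∀ x ∈ Set.Icc a b, ∀ y ∈ Set.Icc a b, |f x - f y| ≤ M * |x - y|) :
    ∀ m : ℕ, ∀ x ∈ Set.Icc a b, ∀ y ∈ Set.Icc a b,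
      |f^[m] x - f^[m] y| ≤ M ^ m * |x - y| := by
  intro m
  induction m with
  | zero => intro x hx y hy; simp
  | succ m ih =>
    intro x hx y hy
    rw [Function.iterate_succ_apply, Function.iterate_succ_apply]
    calc |f^[m] (f x) - f^[m] (f y)| ≤ M ^ m * |f x - f y| := ih (f x) (hmap hx) (f y) (hmap hy)
      _ ≤ M ^ m * (M * |x - y|) :=
          mul_le_mul_of_nonneg_left (hlip x hx y hy) (pow_nonneg hM m)
      _ = M ^ (m+1) * |x - y| := by ring

lemma iter_close {a b M ε : ℝ} {f g : ℝ → ℝ} (hM : 0 ≤ M)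
    (hfmap : Set.MapsTo f (Set.Icc a b) (Set.Icc a b))
    (hgmap : Set.MapsTo g (Set.Icc a b) (Set.Icc a b))
    (hflip : ∀ x ∈ Set.Icc a b, ∀ y ∈ Set.Icc a b, |f x - f y| ≤ M * |x - y|)
    (hε : ∀ x ∈ Set.Icc a b, |f x - g x| ≤ ε) :
    ∀ m : ℕ, ∀ x ∈ Set.Icc a b,
      |f^[m] x - g^[m] x| ≤ (∑ j ∈ Finset.range m, M ^ j) * ε := by
  intro m
  induction m with
  | zero => intro x hx; simp
  | succ m ih =>
    intro x hx
    have hε0 : 0 ≤ ε := le_trans (abs_nonneg _) (hε x hx)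
    rw [Function.iterate_succ_apply, Function.iterate_succ_apply]
    have h1 : |f^[m] (f x) - f^[m] (g x)| ≤ M ^ m * ε := by
      calc |f^[m] (f x) - f^[m] (g x)| ≤ M ^ m * |f x - g x| :=
            iter_lip hM hfmap hflip m (f x) (hfmap hx) (g x) (hgmap hx)
        _ ≤ M ^ m * ε := mul_le_mul_of_nonneg_left (hε x hx) (pow_nonneg hM m)
    have h2 : |f^[m] (g x) - g^[m] (g x)| ≤ (∑ j ∈ Finset.range m, M ^ j) * ε :=
      ih (g x) (hgmap hx)
    calc |f^[m] (f x) - g^[m] (g x)|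
        ≤ |f^[m] (f x) - f^[m] (g x)| + |f^[m] (g x) - g^[m] (g x)| := abs_sub_le _ _ _
      _ ≤ M ^ m * ε + (∑ j ∈ Finset.range m, M ^ j) * ε := add_le_add h1 h2
      _ = (∑ j ∈ Finset.range (m+1), M ^ j) * ε := by rw [Finset.sum_range_succ]; ring

noncomputable def Phi (α : ℕ → ℝ) (n : ℕ) (f : ℝ → ℝ) (x : ℝ) : ℝ :=
  α 1 * x + ∑ k ∈ Finset.Icc 2 n, α k * f^[k-1] x

noncomputable def Psi (a b : ℝ) (α : ℕ → ℝ) (n : ℕ) (f : ℝ → ℝ) : ℝ → ℝ :=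
  Function.invFunOn (Phi α n f) (Set.Icc a b)

lemma sum_split {c : ℕ → ℝ} {n : ℕ} (hn : 1 ≤ n) :
    ∑ k ∈ Finset.Icc 1 n, c k = c 1 + ∑ k ∈ Finset.Icc 2 n, c k := by
  have h2 : Finset.Icc 2 n = Finset.Ioc 1 n := Finset.Icc_add_one_left_eq_Ioc 1 n
  rw [h2, ← Finset.Ioc_insert_left hn, Finset.sum_insert (by simp)]

lemma Phi_bounds {a b δ M : ℝ} {n : ℕ} {α : ℕ → ℝ} {f : ℝ → ℝ}
    (hδ : 0 ≤ δ) (hM : 0 ≤ M) (hα : ∀ k ∈ Finset.Icc 2 n, 0 ≤ α k)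
    (hmap : Set.MapsTo f (Set.Icc a b) (Set.Icc a b))
    (hlip : ∀ x ∈ Set.Icc a b, ∀ y ∈ Set.Icc a b, y ≤ x →
      δ * (x - y) ≤ f x - f y ∧ f x - f y ≤ M * (x - y)) :
    ∀ x ∈ Set.Icc a b, ∀ y ∈ Set.Icc a b, y ≤ x →
      (α 1 + ∑ k ∈ Finset.Icc 2 n, α k * δ ^ (k-1)) * (x - y)
        ≤ Phi α n f x - Phi α n f y ∧
      Phi α n f x - Phi α n f y
        ≤ (α 1 + ∑ k ∈ Finset.Icc 2 n, α k * M ^ (k-1)) * (x - y) := by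
  intro x hx y hy hxy
  have hxy0 : 0 ≤ x - y := by linarith
  have key : ∀ k ∈ Finset.Icc 2 n,
      α k * δ ^ (k-1) * (x - y) ≤ α k * f^[k-1] x - α k * f^[k-1] y ∧
      α k * f^[k-1] x - α k * f^[k-1] y ≤ α k * M ^ (k-1) * (x - y) := by
    intro k hk
    have h := iter_bounds hδ hM hmap hlip (k-1) x hx y hy hxy
    constructor
    · calc α k * δ ^ (k-1) * (x - y) = α k * (δ ^ (k-1) * (x-y)) := by ring
        _ ≤ α k * (f^[k-1] x - f^[k-1] y) := mul_le_mul_of_nonneg_left h.1 (hα k hk)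
        _ = α k * f^[k-1] x - α k * f^[k-1] y := by ring
    · calc α k * f^[k-1] x - α k * f^[k-1] y = α k * (f^[k-1] x - f^[k-1] y) := by ring
        _ ≤ α k * (M ^ (k-1) * (x-y)) := mul_le_mul_of_nonneg_left h.2 (hα k hk)
        _ = α k * M ^ (k-1) * (x - y) := by ring
  have hPhi : Phi α n f x - Phi α n f y
      = α 1 * (x - y) + ∑ k ∈ Finset.Icc 2 n, (α k * f^[k-1] x - α k * f^[k-1] y) := by
    simp only [Phi, Finset.sum_sub_distrib]
    ring
  constructor
  · rw [hPhi, add_mul]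
    have := Finset.sum_le_sum (fun k hk => (key k hk).1)
    rw [← Finset.sum_mul] at this
    linarith
  · rw [hPhi, add_mul]
    have := Finset.sum_le_sum (fun k hk => (key k hk).2)
    rw [← Finset.sum_mul] at this
    linarith
def Good (a b δ M : ℝ) (f : ℝ → ℝ) : Prop :=
  Continuous f ∧ (∀ x, f x ∈ Set.Icc a b) ∧ f a = a ∧ f b = b ∧
  ∀ x ∈ Set.Icc a b, ∀ y ∈ Set.Icc a b, y ≤ x →
    δ * (x - y) ≤ f x - f y ∧ f x - f y ≤ M * (x - y)

lemma Good.mapsTo {a b δ M : ℝ} {f : ℝ → ℝ} (hf : Good a b δ M f) :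
    Set.MapsTo f (Set.Icc a b) (Set.Icc a b) := fun x _ => hf.2.1 x

lemma Phi_fixed {a b δ M : ℝ} {n : ℕ} {α : ℕ → ℝ} {f : ℝ → ℝ}
    (hn : 1 ≤ n) (hαsum : ∑ k ∈ Finset.Icc 1 n, α k = 1)
    (hf : Good a b δ M f) : Phi α n f a = a ∧ Phi α n f b = b := by
  have ha : ∀ k ∈ Finset.Icc 2 n, α k * f^[k-1] a = α k * a := by
    intro k _; rw [Function.iterate_fixed hf.2.2.1]
  have hb : ∀ k ∈ Finset.Icc 2 n, α k * f^[k-1] b = α k * b := by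
    intro k _; rw [Function.iterate_fixed hf.2.2.2.1]
  have hs := sum_split (c := α) hn
  constructor
  · rw [Phi, Finset.sum_congr rfl ha, ← Finset.sum_mul]
    have : α 1 + (∑ k ∈ Finset.Icc 2 n, α k) = 1 := by rw [← hs, hαsum]
    linear_combination a * this
  · rw [Phi, Finset.sum_congr rfl hb, ← Finset.sum_mul]
    have : α 1 + (∑ k ∈ Finset.Icc 2 n, α k) = 1 := by rw [← hs, hαsum]
    linear_combination b * this

lemma Phi_cont {a b δ M : ℝ} {n : ℕ} {α : ℕ → ℝ} {f : ℝ → ℝ}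
    (hf : Good a b δ M f) : Continuous (Phi α n f) := by
  apply Continuous.add (by fun_prop)
  apply continuous_finset_sum
  intro k _
  exact Continuous.mul continuous_const (hf.1.iterate _)

lemma Phi_surj {a b δ M : ℝ} {n : ℕ} {α : ℕ → ℝ} {f : ℝ → ℝ}
    (hab : a ≤ b) (hn : 1 ≤ n) (hαsum : ∑ k ∈ Finset.Icc 1 n, α k = 1)
    (hf : Good a b δ M f) :
    Set.Icc a b ⊆ Phi α n f '' Set.Icc a b := by
  have h := Phi_fixed hn hαsum hf
  have := intermediate_value_Icc hab (Phi_cont (α := α) (n := n) hf).continuousOn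
  rwa [h.1, h.2] at this

lemma Psi_spec {a b δ M : ℝ} {n : ℕ} {α : ℕ → ℝ} {f : ℝ → ℝ}
    (hab : a ≤ b) (hn : 1 ≤ n) (hαsum : ∑ k ∈ Finset.Icc 1 n, α k = 1)
    (hf : Good a b δ M f) {y : ℝ} (hy : y ∈ Set.Icc a b) :
    Psi a b α n f y ∈ Set.Icc a b ∧ Phi α n f (Psi a b α n f y) = y := by
  obtain ⟨x, hx, hxy⟩ := Phi_surj hab hn hαsum hf hy
  exact ⟨Function.invFunOn_mem ⟨x, hx, hxy⟩, Function.invFunOn_eq ⟨x, hx, hxy⟩⟩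
lemma Good.absLip {a b δ M : ℝ} {f : ℝ → ℝ} (hδ : 0 ≤ δ) (hf : Good a b δ M f) :
    ∀ x ∈ Set.Icc a b, ∀ y ∈ Set.Icc a b, |f x - f y| ≤ M * |x - y| := by
  intro x hx y hy
  rcases le_total y x with h | h
  · have h1 := hf.2.2.2.2 x hx y hy h
    have h0 : 0 ≤ f x - f y := le_trans (mul_nonneg hδ (by linarith)) h1.1
    rw [abs_of_nonneg h0, abs_of_nonneg (show (0:ℝ) ≤ x - y by linarith)]
    exact h1.2
  · have h1 := hf.2.2.2.2 y hy x hx h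
    have h0 : 0 ≤ f y - f x := le_trans (mul_nonneg hδ (by linarith)) h1.1
    rw [abs_sub_comm, abs_sub_comm x y, abs_of_nonneg h0,
      abs_of_nonneg (show (0:ℝ) ≤ y - x by linarith)]
    exact h1.2

lemma Psi_bounds {a b δ M : ℝ} {n : ℕ} {α : ℕ → ℝ} {f : ℝ → ℝ}
    (hab : a ≤ b) (hn : 1 ≤ n) (hαsum : ∑ k ∈ Finset.Icc 1 n, α k = 1)
    (hδ : 0 ≤ δ) (hM : 0 ≤ M) (hα : ∀ k ∈ Finset.Icc 2 n, 0 ≤ α k)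
    (hA : 0 < α 1 + ∑ k ∈ Finset.Icc 2 n, α k * δ ^ (k-1))
    (hf : Good a b δ M f) {y y' : ℝ} (hy : y ∈ Set.Icc a b) (hy' : y' ∈ Set.Icc a b)
    (hyy : y' ≤ y) :
    Psi a b α n f y' ≤ Psi a b α n f y ∧
    (α 1 + ∑ k ∈ Finset.Icc 2 n, α k * δ ^ (k-1)) * (Psi a b α n f y - Psi a b α n f y')
      ≤ y - y' ∧
    y - y' ≤ (α 1 + ∑ k ∈ Finset.Icc 2 n, α k * M ^ (k-1)) * (Psi a b α n f y - Psi a b α n f y') := by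
  obtain ⟨hu, hu'⟩ := Psi_spec hab hn hαsum hf hy
  obtain ⟨hv, hv'⟩ := Psi_spec hab hn hαsum hf hy'
  set u := Psi a b α n f y
  set v := Psi a b α n f y'
  have hvu : v ≤ u := by
    by_contra h
    push_neg at h
    have := (Phi_bounds hδ hM hα hf.mapsTo hf.2.2.2.2 v hv u hu h.le).1
    rw [hu', hv'] at this
    nlinarith
  have h2 := Phi_bounds hδ hM hα hf.mapsTo hf.2.2.2.2 u hu v hv hvu
  rw [hu', hv'] at h2
  exact ⟨hvu, h2.1, h2.2⟩

lemma Phi_injOn {a b δ M : ℝ} {n : ℕ} {α : ℕ → ℝ} {f : ℝ → ℝ}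
    (hδ : 0 ≤ δ) (hM : 0 ≤ M) (hα : ∀ k ∈ Finset.Icc 2 n, 0 ≤ α k)
    (hA : 0 < α 1 + ∑ k ∈ Finset.Icc 2 n, α k * δ ^ (k-1))
    (hf : Good a b δ M f) {u v : ℝ} (hu : u ∈ Set.Icc a b) (hv : v ∈ Set.Icc a b)
    (huv : Phi α n f u = Phi α n f v) : u = v := by
  rcases le_total u v with h | h
  · have := (Phi_bounds hδ hM hα hf.mapsTo hf.2.2.2.2 v hv u hu h).1
    nlinarith
  · have := (Phi_bounds hδ hM hα hf.mapsTo hf.2.2.2.2 u hu v hv h).1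
    nlinarith

lemma Psi_close {a b δ M : ℝ} {n : ℕ} {α : ℕ → ℝ} {f g : ℝ → ℝ}
    (hab : a ≤ b) (hn : 1 ≤ n) (hαsum : ∑ k ∈ Finset.Icc 1 n, α k = 1)
    (hδ : 0 ≤ δ) (hM : 0 ≤ M) (hα : ∀ k ∈ Finset.Icc 2 n, 0 ≤ α k)
    (hA : 0 < α 1 + ∑ k ∈ Finset.Icc 2 n, α k * δ ^ (k-1))
    (hf : Good a b δ M f) (hg : Good a b δ M g)
    {ε : ℝ} (hε0 : 0 ≤ ε) (hε : ∀ x ∈ Set.Icc a b, |f x - g x| ≤ ε)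
    {y : ℝ} (hy : y ∈ Set.Icc a b) :
    (α 1 + ∑ k ∈ Finset.Icc 2 n, α k * δ ^ (k-1)) * (Psi a b α n f y - Psi a b α n g y)
      ≤ (∑ k ∈ Finset.Icc 2 n, α k * (∑ j ∈ Finset.range (k - 1), M ^ j)) * ε := by
  obtain ⟨hu, hu'⟩ := Psi_spec hab hn hαsum hf hy
  obtain ⟨hv, hv'⟩ := Psi_spec hab hn hαsum hg hy
  set u := Psi a b α n f y
  set v := Psi a b α n g y
  have hRHS : 0 ≤ (∑ k ∈ Finset.Icc 2 n, α k * (∑ j ∈ Finset.range (k - 1), M ^ j)) * ε := by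
    apply mul_nonneg _ hε0
    apply Finset.sum_nonneg
    intro k hk
    exact mul_nonneg (hα k hk) (Finset.sum_nonneg fun j _ => pow_nonneg hM j)
  rcases le_total u v with h | h
  · nlinarith
  · have h1 := (Phi_bounds hδ hM hα hf.mapsTo hf.2.2.2.2 u hu v hv h).1
    have h2 : Phi α n f u - Phi α n f v = Phi α n g v - Phi α n f v := by
      rw [hu', hv']
    have hε' : ∀ x ∈ Set.Icc a b, |g x - f x| ≤ ε := by
      intro x hx; rw [abs_sub_comm]; exact hε x hx
    have h3 : Phi α n g v - Phi α n f v
        ≤ (∑ k ∈ Finset.Icc 2 n, α k * (∑ j ∈ Finset.range (k - 1), M ^ j)) * ε := by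
      have heq : Phi α n g v - Phi α n f v
          = ∑ k ∈ Finset.Icc 2 n, α k * (g^[k-1] v - f^[k-1] v) := by
        have hterm : ∀ k ∈ Finset.Icc 2 n, α k * (g^[k-1] v - f^[k-1] v)
            = α k * g^[k-1] v - α k * f^[k-1] v := fun k _ => by ring
        rw [Finset.sum_congr rfl hterm, Finset.sum_sub_distrib]
        simp only [Phi]
        ring
      rw [heq, Finset.sum_mul]
      apply Finset.sum_le_sum
      intro k hk
      have h4 : |g^[k-1] v - f^[k-1] v| ≤ (∑ j ∈ Finset.range (k-1), M ^ j) * ε :=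
        iter_close hM hg.mapsTo hf.mapsTo (hg.absLip hδ) hε' (k-1) v hv
      calc α k * (g^[k-1] v - f^[k-1] v) ≤ α k * |g^[k-1] v - f^[k-1] v| :=
            mul_le_mul_of_nonneg_left (le_abs_self _) (hα k hk)
        _ ≤ α k * ((∑ j ∈ Finset.range (k-1), M ^ j) * ε) :=
            mul_le_mul_of_nonneg_left h4 (hα k hk)
        _ = α k * (∑ j ∈ Finset.range (k-1), M ^ j) * ε := by ring
    linarith [h1, h2 ▸ h1, h3]
lemma Psi_absLip {a b δ M : ℝ} {n : ℕ} {α : ℕ → ℝ} {f : ℝ → ℝ}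
    (hab : a ≤ b) (hn : 1 ≤ n) (hαsum : ∑ k ∈ Finset.Icc 1 n, α k = 1)
    (hδ : 0 ≤ δ) (hM : 0 ≤ M) (hα : ∀ k ∈ Finset.Icc 2 n, 0 ≤ α k)
    (hA : 0 < α 1 + ∑ k ∈ Finset.Icc 2 n, α k * δ ^ (k-1))
    (hf : Good a b δ M f) {y y' : ℝ} (hy : y ∈ Set.Icc a b) (hy' : y' ∈ Set.Icc a b) :
    (α 1 + ∑ k ∈ Finset.Icc 2 n, α k * δ ^ (k-1)) * |Psi a b α n f y - Psi a b α n f y'|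
      ≤ |y - y'| := by
  rcases le_total y' y with h | h
  · obtain ⟨h1, h2, _⟩ := Psi_bounds hab hn hαsum hδ hM hα hA hf hy hy' h
    rw [abs_of_nonneg (by linarith), abs_of_nonneg (by linarith)]
    exact h2
  · obtain ⟨h1, h2, _⟩ := Psi_bounds hab hn hαsum hδ hM hα hA hf hy' hy h
    rw [abs_sub_comm, abs_sub_comm y y', abs_of_nonneg (by linarith),
      abs_of_nonneg (by linarith)]
    exact h2

noncomputable def clampBCF {a b : ℝ} (g : ℝ → ℝ) (hc : Continuous g)
    (hbd : ∀ x, g x ∈ Set.Icc a b) : BoundedContinuousFunction ℝ ℝ :=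
  ⟨⟨g, hc⟩, ⟨b - a, fun x y => by
    have hx := hbd x; have hy := hbd y
    rw [Set.mem_Icc] at hx hy
    rw [Real.dist_eq, abs_le]
    constructor <;> linarith⟩⟩

@[simp] lemma clampBCF_apply {a b : ℝ} (g : ℝ → ℝ) (hc : Continuous g)
    (hbd : ∀ x, g x ∈ Set.Icc a b) (x : ℝ) : clampBCF g hc hbd x = g x := rfl
set_option maxHeartbeats 1000000 in
/-- Existence and uniqueness in `F_I(δ,M)` of solutions of the polynomial-like
iterative equation `∑ α_k fᵏ = F` on `ℝ`, when `K₂ < K₀`. -/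
theorem stmt14 (a b δ M : ℝ) (hab : a < b) (hδ0 : 0 < δ) (hδ1 : δ ≤ 1)
    (hM : 1 ≤ M) (n : ℕ) (α : ℕ → ℝ)
    (hα1 : 0 < α 1) (hα1' : α 1 < 1)
    (hα : ∀ k ∈ Finset.Icc 2 n, 0 ≤ α k)
    (hαsum : ∑ k ∈ Finset.Icc 1 n, α k = 1)
    (hK : (∑ k ∈ Finset.Icc 2 n, α k * (∑ j ∈ Finset.range (k - 1), M ^ j))
        < ∑ k ∈ Finset.Icc 1 n, α k * δ ^ (k - 1))
    (F : ℝ → ℝ) (hFcont : Continuous F)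
    (hFrange : Set.range F = Set.Icc a b)
    (hFa : F a = a) (hFb : F b = b)
    (hFlip : ∀ x ∈ Set.Icc a b, ∀ y ∈ Set.Icc a b, y ≤ x →
      ((∑ k ∈ Finset.Icc 1 n, α k * M ^ (k - 1)) * δ) * (x - y) ≤ F x - F y ∧
      F x - F y ≤ ((∑ k ∈ Finset.Icc 1 n, α k * δ ^ (k - 1)) * M) * (x - y)) :
    ∃! f : ℝ → ℝ,
      (Continuous f ∧ Set.range f = Set.Icc a b ∧ f a = a ∧ f b = b ∧
        ∀ x ∈ Set.Icc a b, ∀ y ∈ Set.Icc a b, y ≤ x →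
          δ * (x - y) ≤ f x - f y ∧ f x - f y ≤ M * (x - y)) ∧
      ∀ x : ℝ, ∑ k ∈ Finset.Icc 1 n, α k * f^[k] x = F x := by
  have hδ0' : (0:ℝ) ≤ δ := hδ0.le
  have hM0 : (0:ℝ) ≤ M := by linarith
  -- n ≥ 2
  have hn2 : 2 ≤ n := by
    by_contra h
    push_neg at h
    interval_cases n
    · simp at hαsum
    · simp at hαsum; linarith
  have hn1 : 1 ≤ n := by omega
  set K0 := ∑ k ∈ Finset.Icc 1 n, α k * δ ^ (k - 1) with hK0def
  set K1 := ∑ k ∈ Finset.Icc 1 n, α k * M ^ (k - 1) with hK1def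
  set K2 := ∑ k ∈ Finset.Icc 2 n, α k * (∑ j ∈ Finset.range (k - 1), M ^ j) with hK2def
  have hK0A : K0 = α 1 + ∑ k ∈ Finset.Icc 2 n, α k * δ ^ (k-1) := by
    rw [hK0def, sum_split hn1]; norm_num
  have hK1A : K1 = α 1 + ∑ k ∈ Finset.Icc 2 n, α k * M ^ (k-1) := by
    rw [hK1def, sum_split hn1]; norm_num
  have hαnn : ∀ k ∈ Finset.Icc 1 n, 0 ≤ α k := by
    intro k hk
    rw [Finset.mem_Icc] at hk
    rcases Nat.lt_or_ge k 2 with h | h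
    · have : k = 1 := by omega
      rw [this]; exact hα1.le
    · exact hα k (Finset.mem_Icc.2 ⟨h, hk.2⟩)
  have hK0pos : 0 < K0 := by
    rw [hK0A]
    have : 0 ≤ ∑ k ∈ Finset.Icc 2 n, α k * δ ^ (k-1) :=
      Finset.sum_nonneg fun k hk => mul_nonneg (hα k hk) (pow_nonneg hδ0' _)
    linarith
  have hK0le1 : K0 ≤ 1 := by
    rw [hK0def, ← hαsum]
    apply Finset.sum_le_sum
    intro k hk
    have := pow_le_one₀ hδ0' hδ1 (n := k - 1)
    nlinarith [hαnn k hk]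
  have hK1ge1 : 1 ≤ K1 := by
    rw [hK1def, ← hαsum]
    apply Finset.sum_le_sum
    intro k hk
    have := one_le_pow₀ hM (n := k - 1)
    nlinarith [hαnn k hk]
  have hK1pos : 0 < K1 := by linarith
  have hK2nn : 0 ≤ K2 := by
    rw [hK2def]
    exact Finset.sum_nonneg fun k hk => mul_nonneg (hα k hk)
      (Finset.sum_nonneg fun j _ => pow_nonneg hM0 j)
  have hA : 0 < α 1 + ∑ k ∈ Finset.Icc 2 n, α k * δ ^ (k-1) := hK0A ▸ hK0pos
  -- F is in the class
  have hFs : ∀ x, F x ∈ Set.Icc a b := fun x => hFrange ▸ Set.mem_range_self x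
  have hGoodF : Good a b δ M F := by
    refine ⟨hFcont, hFs, hFa, hFb, fun x hx y hy hxy => ?_⟩
    obtain ⟨h1, h2⟩ := hFlip x hx y hy hxy
    constructor
    · nlinarith [mul_nonneg (mul_nonneg (sub_nonneg.2 hK1ge1) hδ0') (sub_nonneg.2 hxy)]
    · nlinarith [mul_nonneg (mul_nonneg (sub_nonneg.2 hK0le1) hM0) (sub_nonneg.2 hxy)]
  -- the closed subspace
  have hev : ∀ x : ℝ, Continuous fun f : BoundedContinuousFunction ℝ ℝ => f x := fun x =>
    continuous_eval_const x
  set S : Set (BoundedContinuousFunction ℝ ℝ) := {f | Good a b δ M ⇑f} with hSdef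
  have hPclosed : IsClosed S := by
    have hSet : S =
        (⋂ x : ℝ, {f : BoundedContinuousFunction ℝ ℝ | f x ∈ Set.Icc a b}) ∩
        ({f : BoundedContinuousFunction ℝ ℝ | f a = a} ∩
         ({f : BoundedContinuousFunction ℝ ℝ | f b = b} ∩
          (⋂ x : ℝ, ⋂ y : ℝ, {f : BoundedContinuousFunction ℝ ℝ |
            x ∈ Set.Icc a b → y ∈ Set.Icc a b → y ≤ x →
            δ * (x - y) ≤ f x - f y ∧ f x - f y ≤ M * (x - y)}))) := by
      ext f
      simp only [hSdef, Good, Set.mem_setOf_eq, Set.mem_inter_iff, Set.mem_iInter]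
      constructor
      · rintro ⟨_, h1, h2, h3, h4⟩
        exact ⟨h1, h2, h3, fun x y hx hy hxy => h4 x hx y hy hxy⟩
      · rintro ⟨h1, h2, h3, h4⟩
        exact ⟨f.continuous, h1, h2, h3, fun x hx y hy hxy => h4 x y hx hy hxy⟩
    rw [hSet]
    refine IsClosed.inter ?_ (IsClosed.inter ?_ (IsClosed.inter ?_ ?_))
    · exact isClosed_iInter fun x => (isClosed_Icc).preimage (hev x)
    · exact isClosed_eq (hev a) continuous_const
    · exact isClosed_eq (hev b) continuous_const
    · refine isClosed_iInter fun x => isClosed_iInter fun y => ?_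
      rcases Classical.em (x ∈ Set.Icc a b ∧ y ∈ Set.Icc a b ∧ y ≤ x) with hc | hc
      · obtain ⟨hx, hy', hxy⟩ := hc
        have hEq : {f : BoundedContinuousFunction ℝ ℝ |
            x ∈ Set.Icc a b → y ∈ Set.Icc a b → y ≤ x →
            δ * (x - y) ≤ f x - f y ∧ f x - f y ≤ M * (x - y)}
            = {f : BoundedContinuousFunction ℝ ℝ | δ * (x - y) ≤ f x - f y} ∩
              {f : BoundedContinuousFunction ℝ ℝ | f x - f y ≤ M * (x - y)} := by
          ext f
          simp [hx, hy', hxy, Set.mem_setOf_eq]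
        rw [hEq]
        exact (isClosed_le continuous_const ((hev x).sub (hev y))).inter
          (isClosed_le ((hev x).sub (hev y)) continuous_const)
      · have hEq : {f : BoundedContinuousFunction ℝ ℝ |
            x ∈ Set.Icc a b → y ∈ Set.Icc a b → y ≤ x →
            δ * (x - y) ≤ f x - f y ∧ f x - f y ≤ M * (x - y)} = Set.univ := by
          ext f
          simp only [Set.mem_setOf_eq, Set.mem_univ, iff_true]
          intro hx hy' hxy
          exact absurd ⟨hx, hy', hxy⟩ hc
        rw [hEq]
        exact isClosed_univ
  haveI : CompleteSpace ↥S := hPclosed.completeSpace_coe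
  -- the bounded continuous version of F
  set FB : BoundedContinuousFunction ℝ ℝ := clampBCF F hFcont hFs with hFBdef
  have hFBmem : FB ∈ S := hGoodF
  haveI : Nonempty ↥S := ⟨⟨FB, hFBmem⟩⟩
  -- the operator
  have hTgood : ∀ f : BoundedContinuousFunction ℝ ℝ, Good a b δ M ⇑f →
      Continuous (fun x => Psi a b α n (⇑f) (F x)) ∧
      (∀ x, Psi a b α n (⇑f) (F x) ∈ Set.Icc a b) ∧
      Good a b δ M (fun x => Psi a b α n (⇑f) (F x)) := by
    intro f hf
    have hmemPsi : ∀ y ∈ Set.Icc a b, Psi a b α n (⇑f) y ∈ Set.Icc a b ∧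
        Phi α n (⇑f) (Psi a b α n (⇑f) y) = y := fun y hy =>
      Psi_spec hab.le hn1 hαsum hf hy
    have hbdd : ∀ x, Psi a b α n (⇑f) (F x) ∈ Set.Icc a b := fun x =>
      (hmemPsi (F x) (hFs x)).1
    have hcont : Continuous (fun x => Psi a b α n (⇑f) (F x)) := by
      rw [Metric.continuous_iff]
      intro x₀ ε hε
      obtain ⟨d, hd, hball⟩ := Metric.continuous_iff.1 hFcont x₀
        ((α 1 + ∑ k ∈ Finset.Icc 2 n, α k * δ ^ (k-1)) * ε) (mul_pos hA hε)
      refine ⟨d, hd, fun x hx => ?_⟩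
      have h5 := hball x hx
      have h6 := Psi_absLip hab.le hn1 hαsum hδ0' hM0 hα hA hf (hFs x) (hFs x₀)
      rw [Real.dist_eq] at h5 ⊢
      nlinarith [abs_nonneg (Psi a b α n (⇑f) (F x) - Psi a b α n (⇑f) (F x₀))]
    refine ⟨hcont, hbdd, hcont, hbdd, ?_, ?_, ?_⟩
    · -- fixes a
      have ha : a ∈ Set.Icc a b := Set.left_mem_Icc.2 hab.le
      show Psi a b α n (⇑f) (F a) = a
      rw [hFa]
      refine Phi_injOn hδ0' hM0 hα hA hf (hmemPsi a ha).1 ha ?_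
      rw [(hmemPsi a ha).2, (Phi_fixed hn1 hαsum hf).1]
    · -- fixes b
      have hb : b ∈ Set.Icc a b := Set.right_mem_Icc.2 hab.le
      show Psi a b α n (⇑f) (F b) = b
      rw [hFb]
      refine Phi_injOn hδ0' hM0 hα hA hf (hmemPsi b hb).1 hb ?_
      rw [(hmemPsi b hb).2, (Phi_fixed hn1 hαsum hf).2]
    · -- bi-Lipschitz
      intro x hx y hy hxy
      obtain ⟨h1, h2⟩ := hFlip x hx y hy hxy
      have hFxy : F y ≤ F x := by
        nlinarith [mul_nonneg (mul_nonneg hK1pos.le hδ0') (sub_nonneg.2 hxy)]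
      obtain ⟨hmono, h3, h4⟩ := Psi_bounds hab.le hn1 hαsum hδ0' hM0 hα hA hf
        (hFs x) (hFs y) hFxy
      rw [← hK0A] at h3
      rw [← hK1A] at h4
      constructor
      · have h5 : K1 * (δ * (x - y)) ≤
            K1 * (Psi a b α n (⇑f) (F x) - Psi a b α n (⇑f) (F y)) := by
          calc K1 * (δ * (x - y)) = K1 * δ * (x - y) := by ring
            _ ≤ F x - F y := h1
            _ ≤ K1 * (Psi a b α n (⇑f) (F x) - Psi a b α n (⇑f) (F y)) := h4
        exact le_of_mul_le_mul_left h5 hK1pos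
      · have h6 : K0 * (Psi a b α n (⇑f) (F x) - Psi a b α n (⇑f) (F y)) ≤
            K0 * (M * (x - y)) := by
          calc K0 * (Psi a b α n (⇑f) (F x) - Psi a b α n (⇑f) (F y))
              ≤ F x - F y := h3
            _ ≤ K0 * M * (x - y) := h2
            _ = K0 * (M * (x - y)) := by ring
        exact le_of_mul_le_mul_left h6 hK0pos
  set T : ↥S → ↥S := fun f =>
    ⟨clampBCF (fun x => Psi a b α n (⇑(f : BoundedContinuousFunction ℝ ℝ)) (F x))
      (hTgood _ f.2).1 (hTgood _ f.2).2.1, (hTgood _ f.2).2.2⟩ with hTdef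
  have hTapp : ∀ f : ↥S, ∀ x : ℝ, ((T f : ↥S) : BoundedContinuousFunction ℝ ℝ) x
      = Psi a b α n (⇑(f : BoundedContinuousFunction ℝ ℝ)) (F x) := by
    intro f x
    rw [hTdef]
    rfl
  -- contraction
  set θ : NNReal := ⟨K2 / K0, div_nonneg hK2nn hK0pos.le⟩ with hθdef
  have hθ1 : θ < 1 := by
    rw [← NNReal.coe_lt_coe]
    show K2 / K0 < 1
    rw [div_lt_one hK0pos]
    exact hK
  have hTlip : ∀ f g : ↥S, dist (T f) (T g) ≤ (K2 / K0) * dist f g := by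
    intro f g
    rw [Subtype.dist_eq]
    have hd0 : (0:ℝ) ≤ dist f g := dist_nonneg
    refine (BoundedContinuousFunction.dist_le (mul_nonneg (div_nonneg hK2nn hK0pos.le) hd0)).2
      fun x => ?_
    have hε : ∀ z ∈ Set.Icc a b,
        |(f : BoundedContinuousFunction ℝ ℝ) z - (g : BoundedContinuousFunction ℝ ℝ) z|
          ≤ dist f g := by
      intro z _
      rw [← Real.dist_eq, Subtype.dist_eq]
      exact BoundedContinuousFunction.dist_coe_le_dist z
    have h1 := Psi_close hab.le hn1 hαsum hδ0' hM0 hα hA f.2 g.2 hd0 hε (hFs x)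
    have hε' : ∀ z ∈ Set.Icc a b,
        |(g : BoundedContinuousFunction ℝ ℝ) z - (f : BoundedContinuousFunction ℝ ℝ) z|
          ≤ dist f g := by
      intro z hz
      rw [abs_sub_comm]
      exact hε z hz
    have h2' : dist g f = dist f g := dist_comm _ _
    have h2 := Psi_close hab.le hn1 hαsum hδ0' hM0 hα hA g.2 f.2 hd0 hε' (hFs x)
    rw [hTapp f x, hTapp g x]
    rw [Real.dist_eq, div_mul_eq_mul_div, le_div_iff₀ hK0pos]
    rw [← hK0A] at h1 h2
    rcases abs_cases (Psi a b α n (⇑(f : BoundedContinuousFunction ℝ ℝ)) (F x) -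
        Psi a b α n (⇑(g : BoundedContinuousFunction ℝ ℝ)) (F x)) with ⟨he, _⟩ | ⟨he, _⟩
    · rw [he]; nlinarith
    · rw [he]; nlinarith
  have hcontr : ContractingWith θ T := by
    refine ⟨hθ1, LipschitzWith.of_dist_le_mul fun f g => ?_⟩
    have : (θ : ℝ) = K2 / K0 := rfl
    rw [this]
    exact hTlip f g
  -- the fixed point
  set f₀ : ↥S := ContractingWith.fixedPoint T hcontr with hf₀def
  have hfixpt : T f₀ = f₀ := ContractingWith.fixedPoint_isFixedPt hcontr
  have hGood₀ : Good a b δ M ⇑(f₀ : BoundedContinuousFunction ℝ ℝ) := f₀.2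
  have hfix : ∀ x, (f₀ : BoundedContinuousFunction ℝ ℝ) x
      = Psi a b α n (⇑(f₀ : BoundedContinuousFunction ℝ ℝ)) (F x) := by
    intro x
    rw [← hTapp f₀ x, hfixpt]
  -- the iterate splitting
  have hit : ∀ k : ℕ, 1 ≤ k → ∀ h : ℝ → ℝ, ∀ x : ℝ, h^[k] x = h^[k-1] (h x) := by
    intro k hk h x
    conv_lhs => rw [show k = (k-1)+1 from (Nat.succ_pred_eq_of_pos hk).symm]
    rw [Function.iterate_succ_apply]
  have hsumPhi : ∀ g : ℝ → ℝ, ∀ x : ℝ,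
      ∑ k ∈ Finset.Icc 1 n, α k * g^[k] x = Phi α n g (g x) := by
    intro g x
    rw [sum_split hn1, Phi]
    simp only [Function.iterate_one]
    congr 1
    apply Finset.sum_congr rfl
    intro k hk
    rw [Finset.mem_Icc] at hk
    rw [hit k (by omega) g x]
  -- range of a Good function
  have hrange : ∀ g : ℝ → ℝ, Good a b δ M g → Set.range g = Set.Icc a b := by
    intro g hg
    apply Set.Subset.antisymm
    · rintro _ ⟨x, rfl⟩; exact hg.2.1 x
    · intro y hy
      have := intermediate_value_Icc hab.le hg.1.continuousOn
      rw [hg.2.2.1, hg.2.2.2.1] at this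
      obtain ⟨x, _, hx⟩ := this hy
      exact ⟨x, hx⟩
  refine ⟨⇑(f₀ : BoundedContinuousFunction ℝ ℝ), ⟨⟨hGood₀.1, hrange _ hGood₀, hGood₀.2.2.1,
    hGood₀.2.2.2.1, hGood₀.2.2.2.2⟩, ?_⟩, ?_⟩
  · -- the equation
    intro x
    rw [hsumPhi, hfix x]
    exact (Psi_spec hab.le hn1 hαsum hGood₀ (hFs x)).2
  · -- uniqueness
    rintro g ⟨⟨hgc, hgr, hga, hgb, hglip⟩, hgeq⟩
    have hgs : ∀ x, g x ∈ Set.Icc a b := fun x => hgr ▸ Set.mem_range_self x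
    have hGoodg : Good a b δ M g := ⟨hgc, hgs, hga, hgb, hglip⟩
    set GB : BoundedContinuousFunction ℝ ℝ := clampBCF g hgc hgs with hGBdef
    have hGBmem : GB ∈ S := hGoodg
    have hfixg : T ⟨GB, hGBmem⟩ = ⟨GB, hGBmem⟩ := by
      apply Subtype.ext
      apply BoundedContinuousFunction.ext
      intro x
      rw [hTapp ⟨GB, hGBmem⟩ x]
      show Psi a b α n (⇑GB) (F x) = g x
      have hPg : Phi α n g (g x) = F x := by rw [← hsumPhi]; exact hgeq x
      have hGBg : ⇑GB = g := rfl
      rw [hGBg]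
      refine Phi_injOn hδ0' hM0 hα hA hGoodg
        (Psi_spec hab.le hn1 hαsum hGoodg (hFs x)).1 (hgs x) ?_
      rw [(Psi_spec hab.le hn1 hαsum hGoodg (hFs x)).2, hPg]
    have := ContractingWith.fixedPoint_unique hcontr (x := ⟨GB, hGBmem⟩) hfixg
    have hcoe : GB = (f₀ : BoundedContinuousFunction ℝ ℝ) := by
      rw [← hf₀def] at this
      exact congrArg Subtype.val this
    funext x
    have : g x = GB x := rfl
    rw [this, hcoe]
end

section
/- Let 0 < α₁ < 1, α_k ≥ 0 with ∑_{k=1}^n α_k = 1, 0 < δ ≤ 1 ≤ M, K₂ < K₀, and let F, F₁ ∈ F_I(K₁δ, K₀M). If f, f₁ ∈ F_I(δ,M) satisfy ∑_{k=1}^n α_k fᵏ(x) = F(x) and ∑_{k=1}^n α_k f₁ᵏ(x) = F₁(x) for all x ∈ ℝ, then ‖f − f₁‖ ≤ (1/(K₀ − K₂)) ‖F − F₁‖, where ‖·‖ is the supremum norm over ℝ. -/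
lemma memIter16 {a b : ℝ} {f : ℝ → ℝ} (h : ∀ x, f x ∈ Set.Icc a b) :
    ∀ m : ℕ, ∀ x ∈ Set.Icc a b, f^[m] x ∈ Set.Icc a b := by
  intro m
  induction m with
  | zero => intro x hx; simpa using hx
  | succ m _ => intro x hx; rw [Function.iterate_succ_apply']; exact h _

lemma lbIter16 {a b δ : ℝ} {f : ℝ → ℝ} (hδ : 0 ≤ δ) (hmem : ∀ x, f x ∈ Set.Icc a b)
    (hlb : ∀ x ∈ Set.Icc a b, ∀ y ∈ Set.Icc a b, y ≤ x → δ * (x - y) ≤ f x - f y) :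
    ∀ m : ℕ, ∀ x ∈ Set.Icc a b, ∀ y ∈ Set.Icc a b, y ≤ x →
      δ ^ m * (x - y) ≤ f^[m] x - f^[m] y := by
  intro m
  induction m with
  | zero => intro x _ y _ hxy; simp
  | succ m ih =>
    intro x hx y hy hxy
    have h1 := ih x hx y hy hxy
    have hyx : f^[m] y ≤ f^[m] x := by nlinarith [pow_nonneg hδ m]
    have h2 := hlb _ (memIter16 hmem m x hx) _ (memIter16 hmem m y hy) hyx
    rw [Function.iterate_succ_apply', Function.iterate_succ_apply']
    have h3 : δ * (δ ^ m * (x - y)) ≤ δ * (f^[m] x - f^[m] y) :=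
      mul_le_mul_of_nonneg_left h1 hδ
    calc δ ^ (m + 1) * (x - y) = δ * (δ ^ m * (x - y)) := by ring
      _ ≤ δ * (f^[m] x - f^[m] y) := h3
      _ ≤ f (f^[m] x) - f (f^[m] y) := by linarith

lemma diffIter16 {a b M d : ℝ} {f f₁ : ℝ → ℝ} (hM0 : 0 ≤ M)
    (hf : ∀ x, f x ∈ Set.Icc a b) (hf₁ : ∀ x, f₁ x ∈ Set.Icc a b)
    (hlip : ∀ u ∈ Set.Icc a b, ∀ v ∈ Set.Icc a b, |f u - f v| ≤ M * |u - v|)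
    (hd : ∀ x, |f x - f₁ x| ≤ d) :
    ∀ m : ℕ, ∀ x ∈ Set.Icc a b,
      |f^[m] x - f₁^[m] x| ≤ d * ∑ j ∈ Finset.range m, M ^ j := by
  intro m
  induction m with
  | zero => intro x _; simp
  | succ m ih =>
    intro x hx
    rw [Function.iterate_succ_apply', Function.iterate_succ_apply']
    have h1 := hlip _ (memIter16 hf m x hx) _ (memIter16 hf₁ m x hx)
    have h2 := hd (f₁^[m] x)
    have h3 := ih x hx
    have h4 : |f (f^[m] x) - f₁ (f₁^[m] x)| ≤
        |f (f^[m] x) - f (f₁^[m] x)| + |f (f₁^[m] x) - f₁ (f₁^[m] x)| :=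
      abs_sub_le _ _ _
    have h5 : M * |f^[m] x - f₁^[m] x| ≤ M * (d * ∑ j ∈ Finset.range m, M ^ j) :=
      mul_le_mul_of_nonneg_left h3 hM0
    have h6 : ∑ j ∈ Finset.range (m + 1), M ^ j
        = M * ∑ j ∈ Finset.range m, M ^ j + 1 := geom_sum_succ
    rw [h6]; nlinarith

lemma key16 (a b δ M d : ℝ) (n : ℕ) (α : ℕ → ℝ) (hδ0 : 0 ≤ δ) (hM0 : 0 ≤ M)
    (hαn : ∀ k ∈ Finset.Icc 1 n, 0 ≤ α k)
    (f f₁ F F₁ : ℝ → ℝ)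
    (hf : ∀ x, f x ∈ Set.Icc a b) (hf₁ : ∀ x, f₁ x ∈ Set.Icc a b)
    (hlb : ∀ x ∈ Set.Icc a b, ∀ y ∈ Set.Icc a b, y ≤ x → δ * (x - y) ≤ f x - f y)
    (hlip : ∀ u ∈ Set.Icc a b, ∀ v ∈ Set.Icc a b, |f u - f v| ≤ M * |u - v|)
    (hd : ∀ x, |f x - f₁ x| ≤ d)
    (heq : ∀ x : ℝ, ∑ k ∈ Finset.Icc 1 n, α k * f^[k] x = F x)
    (heq₁ : ∀ x : ℝ, ∑ k ∈ Finset.Icc 1 n, α k * f₁^[k] x = F₁ x)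
    (x : ℝ) (hx : f₁ x ≤ f x) :
    (∑ k ∈ Finset.Icc 1 n, α k * δ ^ (k - 1)) * (f x - f₁ x)
      ≤ (F x - F₁ x)
        + (∑ k ∈ Finset.Icc 2 n, α k * (∑ j ∈ Finset.range (k - 1), M ^ j)) * d := by
  have hterm : ∀ k ∈ Finset.Icc 1 n,
      α k * δ ^ (k - 1) * (f x - f₁ x)
        - α k * (∑ j ∈ Finset.range (k - 1), M ^ j) * d
      ≤ α k * (f^[k] x - f₁^[k] x) := by
    intro k hk
    rw [Finset.mem_Icc] at hk
    obtain ⟨m, rfl⟩ : ∃ m, k = m + 1 := ⟨k - 1, by omega⟩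
    simp only [Nat.add_sub_cancel]
    have hA := lbIter16 hδ0 hf hlb m (f x) (hf x) (f₁ x) (hf₁ x) hx
    have hB := diffIter16 hM0 hf hf₁ hlip hd m (f₁ x) (hf₁ x)
    have hB' : -(d * ∑ j ∈ Finset.range m, M ^ j) ≤ f^[m] (f₁ x) - f₁^[m] (f₁ x) :=
      (abs_le.mp hB).1
    have hα' : 0 ≤ α (m + 1) := hαn _ (Finset.mem_Icc.mpr (by omega))
    have hcomb : δ ^ m * (f x - f₁ x) - d * (∑ j ∈ Finset.range m, M ^ j)
        ≤ f^[m + 1] x - f₁^[m + 1] x := by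
      rw [Function.iterate_succ_apply, Function.iterate_succ_apply]
      linarith
    nlinarith [mul_le_mul_of_nonneg_left hcomb hα']
  have hsum := Finset.sum_le_sum hterm
  have hFF : F x - F₁ x = ∑ k ∈ Finset.Icc 1 n, α k * (f^[k] x - f₁^[k] x) := by
    rw [← heq x, ← heq₁ x, ← Finset.sum_sub_distrib]
    exact Finset.sum_congr rfl fun k _ => by ring
  have hlhs : ∑ k ∈ Finset.Icc 1 n,
      (α k * δ ^ (k - 1) * (f x - f₁ x)
        - α k * (∑ j ∈ Finset.range (k - 1), M ^ j) * d)
      = (∑ k ∈ Finset.Icc 1 n, α k * δ ^ (k - 1)) * (f x - f₁ x)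
        - (∑ k ∈ Finset.Icc 1 n, α k * (∑ j ∈ Finset.range (k - 1), M ^ j)) * d := by
    rw [Finset.sum_sub_distrib, Finset.sum_mul, Finset.sum_mul]
  have hK2 : ∑ k ∈ Finset.Icc 1 n, α k * (∑ j ∈ Finset.range (k - 1), M ^ j)
      = ∑ k ∈ Finset.Icc 2 n, α k * (∑ j ∈ Finset.range (k - 1), M ^ j) := by
    refine (Finset.sum_subset ?_ ?_).symm
    · intro k hk; rw [Finset.mem_Icc] at *; omega
    · intro k hk hk2
      have hk1 : k = 1 := by simp only [Finset.mem_Icc] at hk hk2; omega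
      subst hk1; simp
  rw [hlhs, hK2] at hsum
  rw [hFF]
  linarith

/-- Stability: `‖f − f₁‖ ≤ ‖F − F₁‖ / (K₀ − K₂)` for solutions of the
polynomial-like equations with right-hand sides `F`, `F₁`. -/
theorem stmt16 (a b δ M : ℝ) (hab : a < b) (hδ0 : 0 < δ) (hδ1 : δ ≤ 1)
    (hM : 1 ≤ M) (n : ℕ) (α : ℕ → ℝ)
    (hα1 : 0 < α 1) (hα1' : α 1 < 1)
    (hα : ∀ k ∈ Finset.Icc 2 n, 0 ≤ α k)
    (hαsum : ∑ k ∈ Finset.Icc 1 n, α k = 1)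
    (hK : (∑ k ∈ Finset.Icc 2 n, α k * (∑ j ∈ Finset.range (k - 1), M ^ j))
        < ∑ k ∈ Finset.Icc 1 n, α k * δ ^ (k - 1))
    (F F₁ : ℝ → ℝ)
    (hFcont : Continuous F) (hFrange : Set.range F = Set.Icc a b)
    (hFa : F a = a) (hFb : F b = b)
    (hFlip : ∀ x ∈ Set.Icc a b, ∀ y ∈ Set.Icc a b, y ≤ x →
      ((∑ k ∈ Finset.Icc 1 n, α k * M ^ (k - 1)) * δ) * (x - y) ≤ F x - F y ∧
      F x - F y ≤ ((∑ k ∈ Finset.Icc 1 n, α k * δ ^ (k - 1)) * M) * (x - y))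
    (hF₁cont : Continuous F₁) (hF₁range : Set.range F₁ = Set.Icc a b)
    (hF₁a : F₁ a = a) (hF₁b : F₁ b = b)
    (hF₁lip : ∀ x ∈ Set.Icc a b, ∀ y ∈ Set.Icc a b, y ≤ x →
      ((∑ k ∈ Finset.Icc 1 n, α k * M ^ (k - 1)) * δ) * (x - y) ≤ F₁ x - F₁ y ∧
      F₁ x - F₁ y ≤ ((∑ k ∈ Finset.Icc 1 n, α k * δ ^ (k - 1)) * M) * (x - y))
    (f f₁ : ℝ → ℝ)
    (hfcont : Continuous f) (hfrange : Set.range f = Set.Icc a b)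
    (hfa : f a = a) (hfb : f b = b)
    (hflip : ∀ x ∈ Set.Icc a b, ∀ y ∈ Set.Icc a b, y ≤ x →
      δ * (x - y) ≤ f x - f y ∧ f x - f y ≤ M * (x - y))
    (hf₁cont : Continuous f₁) (hf₁range : Set.range f₁ = Set.Icc a b)
    (hf₁a : f₁ a = a) (hf₁b : f₁ b = b)
    (hf₁lip : ∀ x ∈ Set.Icc a b, ∀ y ∈ Set.Icc a b, y ≤ x →
      δ * (x - y) ≤ f₁ x - f₁ y ∧ f₁ x - f₁ y ≤ M * (x - y))
    (heq : ∀ x : ℝ, ∑ k ∈ Finset.Icc 1 n, α k * f^[k] x = F x)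
    (heq₁ : ∀ x : ℝ, ∑ k ∈ Finset.Icc 1 n, α k * f₁^[k] x = F₁ x) :
    sSup (Set.range fun x => |f x - f₁ x|)
      ≤ (1 / ((∑ k ∈ Finset.Icc 1 n, α k * δ ^ (k - 1))
          - ∑ k ∈ Finset.Icc 2 n, α k * (∑ j ∈ Finset.range (k - 1), M ^ j))) *
        sSup (Set.range fun x => |F x - F₁ x|) := by
  have hM0 : (0:ℝ) ≤ M := le_trans zero_le_one hM
  have hfI : ∀ x, f x ∈ Set.Icc a b := fun x => hfrange ▸ Set.mem_range_self x
  have hf₁I : ∀ x, f₁ x ∈ Set.Icc a b := fun x => hf₁range ▸ Set.mem_range_self x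
  have hFI : ∀ x, F x ∈ Set.Icc a b := fun x => hFrange ▸ Set.mem_range_self x
  have hF₁I : ∀ x, F₁ x ∈ Set.Icc a b := fun x => hF₁range ▸ Set.mem_range_self x
  have hαn : ∀ k ∈ Finset.Icc 1 n, 0 ≤ α k := by
    intro k hk
    rw [Finset.mem_Icc] at hk
    by_cases hk1 : k = 1
    · subst hk1; exact hα1.le
    · exact hα k (Finset.mem_Icc.mpr ⟨by omega, hk.2⟩)
  have habs : ∀ g g₁ : ℝ → ℝ,
      (∀ x ∈ Set.Icc a b, ∀ y ∈ Set.Icc a b, y ≤ x →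
        δ * (x - y) ≤ g x - g y ∧ g x - g y ≤ M * (x - y)) →
      ∀ u ∈ Set.Icc a b, ∀ v ∈ Set.Icc a b, |g u - g v| ≤ M * |u - v| := by
    intro g g₁ hg u hu v hv
    rcases le_total v u with h | h
    · have h1 := hg u hu v hv h
      rw [abs_of_nonneg (by nlinarith [h1.1] : (0:ℝ) ≤ g u - g v),
        abs_of_nonneg (by linarith)]
      exact h1.2
    · have h1 := hg v hv u hu h
      rw [abs_sub_comm, abs_sub_comm u v,
        abs_of_nonneg (by nlinarith [h1.1] : (0:ℝ) ≤ g v - g u),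
        abs_of_nonneg (by linarith)]
      exact h1.2
  set K0 := ∑ k ∈ Finset.Icc 1 n, α k * δ ^ (k - 1) with hK0def
  set K2 := ∑ k ∈ Finset.Icc 2 n, α k * (∑ j ∈ Finset.range (k - 1), M ^ j) with hK2def
  set d := sSup (Set.range fun x => |f x - f₁ x|) with hddef
  set E := sSup (Set.range fun x => |F x - F₁ x|) with hEdef
  have hbd : BddAbove (Set.range fun x => |f x - f₁ x|) := by
    refine ⟨b - a, ?_⟩
    rintro y ⟨x, rfl⟩
    have h1 := hfI x; have h2 := hf₁I x
    rw [Set.mem_Icc] at h1 h2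
    rw [abs_le]; constructor <;> simp <;> linarith
  have hbdF : BddAbove (Set.range fun x => |F x - F₁ x|) := by
    refine ⟨b - a, ?_⟩
    rintro y ⟨x, rfl⟩
    have h1 := hFI x; have h2 := hF₁I x
    rw [Set.mem_Icc] at h1 h2
    rw [abs_le]; constructor <;> simp <;> linarith
  have hdup : ∀ x, |f x - f₁ x| ≤ d := fun x => le_csSup hbd (Set.mem_range_self x)
  have hEup : ∀ x, |F x - F₁ x| ≤ E := fun x => le_csSup hbdF (Set.mem_range_self x)
  have hd0 : 0 ≤ d := le_trans (abs_nonneg _) (hdup a)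
  have hn1 : 1 ≤ n := by
    by_contra h
    push_neg at h
    rw [Finset.Icc_eq_empty (by omega), Finset.sum_empty] at hαsum
    exact one_ne_zero hαsum.symm
  have hK0pos : 0 < K0 := by
    have h1mem : (1:ℕ) ∈ Finset.Icc 1 n := Finset.mem_Icc.mpr ⟨le_refl 1, hn1⟩
    have h2 := Finset.single_le_sum
      (f := fun k => α k * δ ^ (k - 1))
      (fun k hk => mul_nonneg (hαn k hk) (pow_nonneg hδ0.le _)) h1mem
    simp only [Nat.sub_self, pow_zero, mul_one] at h2
    exact lt_of_lt_of_le hα1 h2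
  have hCpos : 0 < K0 - K2 := sub_pos.mpr hK
  have hdup' : ∀ x, |f₁ x - f x| ≤ d := fun x => (abs_sub_comm (f₁ x) (f x)) ▸ hdup x
  have hmain : ∀ x, K0 * |f x - f₁ x| ≤ E + K2 * d := by
    intro x
    rcases le_total (f₁ x) (f x) with h | h
    · have hkey := key16 a b δ M d n α hδ0.le hM0 hαn f f₁ F F₁ hfI hf₁I
        (fun x hx y hy hxy => (hflip x hx y hy hxy).1)
        (habs f f₁ hflip) hdup heq heq₁ x h
      rw [abs_of_nonneg (by linarith)]
      have hE := hEup x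
      have hle : F x - F₁ x ≤ |F x - F₁ x| := le_abs_self _
      linarith
    · have hkey := key16 a b δ M d n α hδ0.le hM0 hαn f₁ f F₁ F hf₁I hfI
        (fun x hx y hy hxy => (hf₁lip x hx y hy hxy).1)
        (habs f₁ f hf₁lip) hdup' heq₁ heq x h
      rw [abs_sub_comm, abs_of_nonneg (by linarith)]
      have hE := hEup x
      have hle : F₁ x - F x ≤ |F x - F₁ x| := by
        rw [abs_sub_comm]; exact le_abs_self _
      linarith
  have hKd : K0 * d ≤ E + K2 * d := by
    have hdle : d ≤ (E + K2 * d) / K0 := by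
      refine csSup_le ⟨_, Set.mem_range_self a⟩ ?_
      rintro y ⟨x, rfl⟩
      rw [le_div_iff₀ hK0pos]
      linarith [hmain x]
    rw [le_div_iff₀ hK0pos] at hdle
    linarith
  rw [one_div, inv_mul_eq_div, le_div_iff₀ hCpos]
  linarith
end
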